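/- Every φ in the space P̂ = P₃ ⊕ span{x³y − xy³} satisfies the linear relation 4(φ(g₂)+φ(g₈)) − 5(φ(g₁)+φ(g₃)+φ(g₇)+φ(g₉)) = 4(φ(g₅)+φ(g₁₁)) − 5(φ(g₄)+φ(g₆)+φ(g₁₀)+φ(g₁₂)) among its values at the twelve Gauss points of the square [−1,1]². -/

import Mathlib

open MvPolynomial

noncomputable def s : ℝ := Real.sqrt (3 / 5)

/-- Evaluation of a bivariate polynomial at the point `(a, b)`. -/
noncomputable def ev (φ : MvPolynomial (Fin 2) ℝ) (a b : ℝ) : ℝ := eval ![a, b] φ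

lemma hs2 : s ^ 2 = 3 / 5 := Real.sq_sqrt (by norm_num)

lemma ev_add (p q : MvPolynomial (Fin 2) ℝ) (a b : ℝ) :
    ev (p + q) a b = ev p a b + ev q a b := by simp [ev]

lemma ev_monomial (d : Fin 2 →₀ ℕ) (c : ℝ) (a b : ℝ) :
    ev (monomial d c) a b = c * (a ^ d 0 * b ^ d 1) := by
  rw [ev, eval_monomial, Finsupp.prod_fintype _ _ (by simp)]
  simp [Fin.prod_univ_two]

/-- The relation as a linear functional. -/
noncomputable def L (φ : MvPolynomial (Fin 2) ℝ) : ℝ :=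
  (4 * (ev φ 0 (-1) + ev φ 0 1)
      - 5 * (ev φ (-s) (-1) + ev φ s (-1) + ev φ s 1 + ev φ (-s) 1))
  - (4 * (ev φ 1 0 + ev φ (-1) 0)
      - 5 * (ev φ 1 (-s) + ev φ 1 s + ev φ (-1) s + ev φ (-1) (-s)))

lemma L_monomial (d : Fin 2 →₀ ℕ) (c : ℝ) (h : d 0 + d 1 ≤ 3) :
    L (monomial d c) = 0 := by
  have h0 : d 0 ≤ 3 := le_trans (Nat.le_add_right _ _) h
  have h1 : d 1 ≤ 3 := le_trans (Nat.le_add_left _ _) h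
  have hs := hs2
  simp only [L, ev_monomial]
  have hc : c * s ^ 2 = c * (3 / 5) := by rw [hs]
  interval_cases i : d 0 <;> interval_cases j : d 1 <;>
    first
      | (exfalso; omega)
      | (ring_nf; try linarith [hc])

lemma L_sum {ι : Type*} (t : Finset ι) (f : ι → MvPolynomial (Fin 2) ℝ)
    (h : ∀ i ∈ t, L (f i) = 0) : L (∑ i ∈ t, f i) = 0 := by
  classical
  induction t using Finset.induction_on with
  | empty => simp [L, ev]
  | insert _ _ hx ih =>
    rename_i a t'
    rw [Finset.sum_insert hx]
    have : L (f a + ∑ i ∈ t', f i) = L (f a) + L (∑ i ∈ t', f i) := by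
      simp only [L, ev_add]; ring
    rw [this, h a (Finset.mem_insert_self _ _), ih (fun i hi => h i (Finset.mem_insert_of_mem hi))]
    ring

lemma L_deg3 (p : MvPolynomial (Fin 2) ℝ) (hp : p.totalDegree ≤ 3) : L p = 0 := by
  rw [← p.support_sum_monomial_coeff]
  apply L_sum
  intro d hd
  apply L_monomial
  have := MvPolynomial.le_totalDegree hd
  have hsum : (d.sum fun _ e => e) = d 0 + d 1 := by
    rw [Finsupp.sum_fintype _ _ (by simp)]
    simp [Fin.sum_univ_two]
  omega

/-- Proposition 2.2: every `φ ∈ P̂ = P₃ ⊕ span{x³y - xy³}` satisfies the linear relation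
`4(φ(g₂)+φ(g₈)) - 5(φ(g₁)+φ(g₃)+φ(g₇)+φ(g₉)) = 4(φ(g₅)+φ(g₁₁)) - 5(φ(g₄)+φ(g₆)+φ(g₁₀)+φ(g₁₂))`
among the values at the twelve Gauss points of `[-1,1]²`. -/
theorem gauss_values_relation (φ : MvPolynomial (Fin 2) ℝ)
    (hφ : ∃ (p : MvPolynomial (Fin 2) ℝ) (c : ℝ), p.totalDegree ≤ 3 ∧
      φ = p + C c * (X 0 ^ 3 * X 1 - X 0 * X 1 ^ 3)) :
    4 * (ev φ 0 (-1) + ev φ 0 1)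
      - 5 * (ev φ (-s) (-1) + ev φ s (-1) + ev φ s 1 + ev φ (-s) 1)
    = 4 * (ev φ 1 0 + ev φ (-1) 0)
      - 5 * (ev φ 1 (-s) + ev φ 1 s + ev φ (-1) s + ev φ (-1) (-s)) := by
  obtain ⟨p, c, hp, rfl⟩ := hφ
  have hLp : L p = 0 := L_deg3 p hp
  have hLq : L (C c * (X 0 ^ 3 * X 1 - X 0 * X 1 ^ 3)) = 0 := by
    simp only [L, ev]
    simp only [map_add, map_sub, map_mul, map_pow, eval_C, eval_X]
    simp [Matrix.cons_val_zero, Matrix.cons_val_one]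
    ring
  have : L (p + C c * (X 0 ^ 3 * X 1 - X 0 * X 1 ^ 3)) = 0 := by
    have : L (p + C c * (X 0 ^ 3 * X 1 - X 0 * X 1 ^ 3))
        = L p + L (C c * (X 0 ^ 3 * X 1 - X 0 * X 1 ^ 3)) := by
      simp only [L, ev_add]; ring
    rw [this, hLp, hLq]; ring
  simp only [L] at this
  linarith [this]
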